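/- Let t₀ ≥ 0 and let f, g : (t₀, ∞) → ℝ be twice continuously differentiable functions satisfying t f″(t) + f′(t) + 2t f′(t)(f′(t)² + g′(t)²) = 0 and t g″(t) + g′(t) + 2t g′(t)(f′(t)² + g′(t)²) = 0 for all t > t₀. Define F(u, v) = f(u² + v²) and G(u, v) = g(u² + v²) on the region {(u,v) : u² + v² > t₀}. Then the graph (u, v, F(u, v), G(u, v)) in ℝ⁴ satisfies the minimal surface equations: g₂₂ ∂²h/∂u² + g₁₁ ∂²h/∂v² − 2 g₁₂ ∂²h/∂u∂v = 0 for h = F and h = G, where g₁₁ = 1 + F_u² + G_u², g₂₂ = 1 + F_v² + G_v², g₁₂ = F_u F_v + G_u G_v. -/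

import Mathlib

noncomputable section

/-- Partial derivative in the first variable. -/
def pd1 (F : ℝ → ℝ → ℝ) (u v : ℝ) : ℝ := deriv (fun x => F x v) u

/-- Partial derivative in the second variable. -/
def pd2 (F : ℝ → ℝ → ℝ) (u v : ℝ) : ℝ := deriv (fun y => F u y) v

/-- The minimal surface equations for the graph `(u, v, F1(u,v), F2(u,v)) ⊂ ℝ⁴`. -/
def MinimalGraphEq (F1 F2 : ℝ → ℝ → ℝ) (u v : ℝ) : Prop :=
  ((1 + (pd2 F1 u v) ^ 2 + (pd2 F2 u v) ^ 2) * pd1 (pd1 F1) u v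
    + (1 + (pd1 F1 u v) ^ 2 + (pd1 F2 u v) ^ 2) * pd2 (pd2 F1) u v
    - 2 * (pd1 F1 u v * pd2 F1 u v + pd1 F2 u v * pd2 F2 u v) * pd1 (pd2 F1) u v = 0) ∧
  ((1 + (pd2 F1 u v) ^ 2 + (pd2 F2 u v) ^ 2) * pd1 (pd1 F2) u v
    + (1 + (pd1 F1 u v) ^ 2 + (pd1 F2 u v) ^ 2) * pd2 (pd2 F2) u v
    - 2 * (pd1 F1 u v * pd2 F1 u v + pd1 F2 u v * pd2 F2 u v) * pd1 (pd2 F2) u v = 0)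

lemma key (t0 : ℝ) (h : ℝ → ℝ) (hh : ContDiffOn ℝ 2 h (Set.Ioi t0)) (u v : ℝ)
    (huv : t0 < u ^ 2 + v ^ 2) :
    pd1 (fun u v => h (u ^ 2 + v ^ 2)) u v = deriv h (u ^ 2 + v ^ 2) * (2 * u) ∧
    pd2 (fun u v => h (u ^ 2 + v ^ 2)) u v = deriv h (u ^ 2 + v ^ 2) * (2 * v) ∧
    pd1 (pd1 (fun u v => h (u ^ 2 + v ^ 2))) u v
      = deriv (deriv h) (u ^ 2 + v ^ 2) * (2 * u) * (2 * u)
        + deriv h (u ^ 2 + v ^ 2) * 2 ∧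
    pd2 (pd2 (fun u v => h (u ^ 2 + v ^ 2))) u v
      = deriv (deriv h) (u ^ 2 + v ^ 2) * (2 * v) * (2 * v)
        + deriv h (u ^ 2 + v ^ 2) * 2 ∧
    pd1 (pd2 (fun u v => h (u ^ 2 + v ^ 2))) u v
      = deriv (deriv h) (u ^ 2 + v ^ 2) * (2 * u) * (2 * v) := by
  have hd1 : DifferentiableOn ℝ h (Set.Ioi t0) := hh.differentiableOn (by norm_num)
  have hd2 : DifferentiableOn ℝ (deriv h) (Set.Ioi t0) :=
    (hh.deriv_of_isOpen isOpen_Ioi (m := 1) (by norm_num)).differentiableOn one_ne_zero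
  -- derivative of the square map
  have hsq : ∀ (x c : ℝ), HasDerivAt (fun x : ℝ => x ^ 2 + c) (2 * x) x := by
    intro x c
    simpa [mul_comm] using (hasDerivAt_pow 2 x).add_const c
  have hch : ∀ (x c : ℝ), t0 < x ^ 2 + c →
      HasDerivAt (fun x => h (x ^ 2 + c)) (deriv h (x ^ 2 + c) * (2 * x)) x := by
    intro x c hx
    exact ((hd1.differentiableAt (isOpen_Ioi.mem_nhds hx)).hasDerivAt).comp x (hsq x c)
  have hch' : ∀ (x c : ℝ), t0 < x ^ 2 + c →
      HasDerivAt (fun x => deriv h (x ^ 2 + c)) (deriv (deriv h) (x ^ 2 + c) * (2 * x)) x := by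
    intro x c hx
    exact ((hd2.differentiableAt (isOpen_Ioi.mem_nhds hx)).hasDerivAt).comp x (hsq x c)
  -- first partials as formulas on the open set
  have hp1 : ∀ x y : ℝ, t0 < x ^ 2 + y ^ 2 →
      pd1 (fun u v => h (u ^ 2 + v ^ 2)) x y = deriv h (x ^ 2 + y ^ 2) * (2 * x) := by
    intro x y hx
    exact (hch x (y ^ 2) hx).deriv
  have hp2 : ∀ x y : ℝ, t0 < x ^ 2 + y ^ 2 →
      pd2 (fun u v => h (u ^ 2 + v ^ 2)) x y = deriv h (x ^ 2 + y ^ 2) * (2 * y) := by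
    intro x y hx
    have hlt : t0 < y ^ 2 + x ^ 2 := by linarith
    have e : (fun z : ℝ => h (x ^ 2 + z ^ 2)) = fun z => h (z ^ 2 + x ^ 2) := by
      funext z; ring_nf
    rw [pd2, e]
    rw [show x ^ 2 + y ^ 2 = y ^ 2 + x ^ 2 by ring]
    exact (hch y (x ^ 2) hlt).deriv
  have hopen : IsOpen {x : ℝ | t0 < x ^ 2 + v ^ 2} :=
    isOpen_lt continuous_const (by continuity)
  have hopen2 : IsOpen {y : ℝ | t0 < u ^ 2 + y ^ 2} :=
    isOpen_lt continuous_const (by continuity)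
  refine ⟨hp1 u v huv, hp2 u v huv, ?_, ?_, ?_⟩
  · -- pd1 pd1
    have hev : (fun x => pd1 (fun u v => h (u ^ 2 + v ^ 2)) x v)
        =ᶠ[nhds u] (fun x => deriv h (x ^ 2 + v ^ 2) * (2 * x)) := by
      filter_upwards [hopen.mem_nhds huv] with x hx using hp1 x v hx
    have : HasDerivAt (fun x => deriv h (x ^ 2 + v ^ 2) * (2 * x))
        (deriv (deriv h) (u ^ 2 + v ^ 2) * (2 * u) * (2 * u)
          + deriv h (u ^ 2 + v ^ 2) * 2) u := by
      simpa [Pi.mul_def] using (hch' u (v ^ 2) huv).mul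
        ((hasDerivAt_id u).const_mul 2)
    rw [pd1, hev.deriv_eq, this.deriv]
  · -- pd2 pd2
    have hev : (fun y => pd2 (fun u v => h (u ^ 2 + v ^ 2)) u y)
        =ᶠ[nhds v] (fun y => deriv h (u ^ 2 + y ^ 2) * (2 * y)) := by
      filter_upwards [hopen2.mem_nhds huv] with y hy using hp2 u y hy
    have hlt : t0 < v ^ 2 + u ^ 2 := by linarith
    have : HasDerivAt (fun y => deriv h (u ^ 2 + y ^ 2) * (2 * y))
        (deriv (deriv h) (u ^ 2 + v ^ 2) * (2 * v) * (2 * v)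
          + deriv h (u ^ 2 + v ^ 2) * 2) v := by
      have h1 : HasDerivAt (fun y => deriv h (u ^ 2 + y ^ 2))
          (deriv (deriv h) (u ^ 2 + v ^ 2) * (2 * v)) v := by
        simpa [add_comm (u ^ 2)] using hch' v (u ^ 2) hlt
      simpa [Pi.mul_def] using h1.mul ((hasDerivAt_id v).const_mul 2)
    rw [pd2, hev.deriv_eq, this.deriv]
  · -- pd1 pd2
    have hev : (fun x => pd2 (fun u v => h (u ^ 2 + v ^ 2)) x v)
        =ᶠ[nhds u] (fun x => deriv h (x ^ 2 + v ^ 2) * (2 * v)) := by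
      filter_upwards [hopen.mem_nhds huv] with x hx using hp2 x v hx
    have : HasDerivAt (fun x => deriv h (x ^ 2 + v ^ 2) * (2 * v))
        (deriv (deriv h) (u ^ 2 + v ^ 2) * (2 * u) * (2 * v)) u :=
      (hch' u (v ^ 2) huv).mul_const (2 * v)
    rw [pd1, hev.deriv_eq, this.deriv]

/-- if `f, g` are C² on `(t₀, ∞)` and solve the radial ODE system
`t h″ + h′ + 2t h′((f′)² + (g′)²) = 0` there, then the rotationally symmetric graph
`(u, v, f(u² + v²), g(u² + v²))` satisfies the minimal surface equations on the
region `u² + v² > t₀`. -/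
theorem stmt16 (t0 : ℝ) (ht0 : 0 ≤ t0) (f g : ℝ → ℝ)
    (hf : ContDiffOn ℝ 2 f (Set.Ioi t0)) (hg : ContDiffOn ℝ 2 g (Set.Ioi t0))
    (hodef : ∀ t, t0 < t →
      t * deriv (deriv f) t + deriv f t
        + 2 * t * deriv f t * ((deriv f t) ^ 2 + (deriv g t) ^ 2) = 0)
    (hodeg : ∀ t, t0 < t →
      t * deriv (deriv g) t + deriv g t
        + 2 * t * deriv g t * ((deriv f t) ^ 2 + (deriv g t) ^ 2) = 0)
    (u v : ℝ) (huv : t0 < u ^ 2 + v ^ 2) :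
    MinimalGraphEq (fun u v => f (u ^ 2 + v ^ 2)) (fun u v => g (u ^ 2 + v ^ 2)) u v := by
  obtain ⟨f1, f2, f11, f22, f12⟩ := key t0 f hf u v huv
  obtain ⟨g1, g2, g11, g22, g12⟩ := key t0 g hg u v huv
  have hF := hodef (u ^ 2 + v ^ 2) huv
  have hG := hodeg (u ^ 2 + v ^ 2) huv
  constructor
  · rw [f1, f2, f11, f22, f12, g1, g2]
    linear_combination 4 * hF
  · rw [f1, f2, g11, g22, g12, g1, g2]
    linear_combination 4 * hG
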